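/- arXiv:2604.15880 — 2 statements merged into one kernel-verified Lean document; each statement's English description precedes it below -/
import Mathlib

section
/- Let r ∈ ℕ*, p_k, q_k, b_k ∈ ℕ, m_k = 1 + p_k + b_k, n = Σ_{k=1}^r m_k, and a_{k,i} = (i + q_k/2)/(m_k + 1 + q_k). If the multiset {a_{k,i} : 1 ≤ k ≤ r, 1 ≤ i ≤ m_k} equals {1/(n+1), 2/(n+1), …, n/(n+1)}, then r = 1 (and if n ≥ 2, moreover q_1 = 0 and m_1 = n). -/
/-- if the multiset `{a_{k,i}}` equals `{1/(n+1), …, n/(n+1)}`, where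
`n = Σ_k m_k`, `m_k = 1 + p_k + b_k`, `a_{k,i} = (i + q_k/2)/(m_k + 1 + q_k)`,
then `r = 1`; and if `n ≥ 2`, moreover `q_1 = 0` and `m_1 = n`. -/
theorem rank_one_from_multiset (r : ℕ) (hr : 0 < r) (p q b : ℕ → ℕ)
    (n : ℕ) (hn : n = ∑ k ∈ Finset.range r, (1 + p k + b k))
    (hmult :
      (Finset.range r).val.bind (fun k =>
        (Finset.range (1 + p k + b k)).val.map (fun i =>
          (((i : ℚ) + 1) + (q k : ℚ) / 2) / (((1 + p k + b k : ℕ) : ℚ) + 1 + (q k : ℚ))))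
        = (Finset.range n).val.map (fun j => ((j : ℚ) + 1) / ((n : ℚ) + 1))) :
    r = 1 ∧ (2 ≤ n → q 0 = 0 ∧ 1 + p 0 + b 0 = n) := by
  have hn1 : 1 ≤ n := by
    rw [hn]
    calc 1 ≤ r := hr
      _ = ∑ _k ∈ Finset.range r, 1 := by simp
      _ ≤ _ := Finset.sum_le_sum (fun k _ => by omega)
  have hmem : (((0 : ℕ) : ℚ) + 1) / ((n : ℚ) + 1) ∈
      (Finset.range n).val.map (fun j => ((j : ℚ) + 1) / ((n : ℚ) + 1)) := by
    exact Multiset.mem_map.mpr ⟨0, by simp; omega, rfl⟩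
  rw [← hmult] at hmem
  obtain ⟨k, hk, hmem2⟩ := Multiset.mem_bind.mp hmem
  obtain ⟨iq, hi, heq⟩ := Multiset.mem_map.mp hmem2
  obtain ⟨i, hi', rfl⟩ : ∃ i : ℕ, i < 1 + p k + b k ∧ (i : ℚ) = iq := by
    simpa using hi
  have hk' : k ∈ Finset.range r := hk
  have hkr : k < r := Finset.mem_range.mp hk'
  have hden : ((1 + p k + b k : ℕ) : ℚ) + 1 + (q k : ℚ) ≠ 0 := by positivity
  have hden2 : ((n : ℚ) + 1) ≠ 0 := by positivity
  have hq : ((2 * (n + 1) * (i + 1) + (n + 1) * q k : ℕ) : ℚ)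
      = ((2 * (1 + p k + b k) + 2 + 2 * q k : ℕ) : ℚ) := by
    field_simp at heq
    push_cast at heq ⊢
    linarith
  have E : 2 * (n + 1) * (i + 1) + (n + 1) * q k
      = 2 * (1 + p k + b k) + 2 + 2 * q k := by exact_mod_cast hq
  have hmn : 1 + p k + b k ≤ n := by
    rw [hn]
    exact Finset.single_le_sum (f := fun j => 1 + p j + b j) (fun j _ => Nat.zero_le _) hk'
  -- from E: m ≥ n, so m = n
  have h1 : 2 * (n + 1) * 1 ≤ 2 * (n + 1) * (i + 1) :=
    Nat.mul_le_mul_left _ (by omega)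
  have h2 : 2 * q k ≤ (n + 1) * q k := Nat.mul_le_mul_right _ (by omega)
  have hmeq : 1 + p k + b k = n := by omega
  -- i = 0 and (n-1) * q k = 0
  have hi0 : i = 0 := by
    by_contra hi0
    have : 2 * (n + 1) * 2 ≤ 2 * (n + 1) * (i + 1) :=
      Nat.mul_le_mul_left _ (by omega)
    omega
  have hq0 : (n + 1) * q k = 2 * q k := by
    rw [hi0] at E; omega
  have hqz : 2 ≤ n → q k = 0 := by
    intro h2n
    rcases Nat.eq_zero_or_pos (q k) with h | h
    · exact h
    · nlinarith
  -- r = 1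
  have hsum : (1 + p k + b k) + ∑ j ∈ (Finset.range r).erase k, (1 + p j + b j) = n := by
    rw [hn]
    exact Finset.add_sum_erase _ (fun j => 1 + p j + b j) hk'
  have hge : (r - 1 : ℕ) ≤ ∑ j ∈ (Finset.range r).erase k, (1 + p j + b j) := by
    calc (r - 1 : ℕ) = ((Finset.range r).erase k).card := by
          rw [Finset.card_erase_of_mem hk', Finset.card_range]
      _ = ∑ _j ∈ (Finset.range r).erase k, 1 := by simp
      _ ≤ _ := Finset.sum_le_sum (fun j _ => by omega)
  have hr1 : r = 1 := by omega
  have hk0 : k = 0 := by omega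
  subst hk0
  exact ⟨hr1, fun h2n => ⟨hqz h2n, hmeq⟩⟩
end

section
/- Let P(y) = Σ_{j=0}^n A_j y^j with A_j ∈ ℝ, A_n ≠ 0, P(1) > 0, and set R(t) := y^{m+1}P(y) with y = 1/(1−t), p(t) := R'(t)/R(t), A, s ∈ ℝ with s ≠ 0. If the identity (A + s·t·p(t))^n · p(t)^{m−1} · (p(t) + t·p'(t)) = C·R(t) holds identically (as an identity of meromorphic functions of t, C a nonzero constant), then P(y) = c·y^n with c = A_n > 0, i.e., R(t) = c(1−t)^{−(n+m+1)}. -/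
open Polynomial

private lemma wron (α : ℂ) (a : ℕ) (h k : Polynomial ℂ) :
    derivative ((X - Polynomial.C α) ^ a * h) * ((X - Polynomial.C α) ^ (a + 1) * k)
      - ((X - Polynomial.C α) ^ a * h) * derivative ((X - Polynomial.C α) ^ (a + 1) * k)
    = (X - Polynomial.C α) ^ (2 * a) *
        ((X - Polynomial.C α) * (derivative h * k - h * derivative k) - h * k) := by
  induction a generalizing h k with
  | zero =>
      simp only [pow_zero, one_mul, zero_add, pow_one, derivative_mul, derivative_X_sub_C,
        mul_one, one_mul]
      ring
  | succ a ih =>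
      have h1 : (X - Polynomial.C α) ^ (a + 1) * h
          = (X - Polynomial.C α) ^ a * ((X - Polynomial.C α) * h) := by ring
      have h2 : (X - Polynomial.C α) ^ (a + 1 + 1) * k
          = (X - Polynomial.C α) ^ (a + 1) * ((X - Polynomial.C α) * k) := by ring
      rw [h1, h2, ih]
      simp only [derivative_mul, derivative_X_sub_C, mul_one, one_mul]
      ring

private lemma no_root_aux (n' m' N : ℕ) (hN : N = n' + m' + 3) (A s c : ℂ) (hs : s ≠ 0)
    (Q : Polynomial ℂ) (hQ0 : Q.eval 0 ≠ 0) (hQ1 : Q.eval 1 ≠ 0)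
    (hid :
      (Polynomial.C A * (Q * (1 - X)) +
            Polynomial.C s * X * ((1 - X) * derivative Q + (N : Polynomial ℂ) * Q)) ^ (n' + 1) *
          ((1 - X) * derivative Q + (N : Polynomial ℂ) * Q) ^ m' *
          (derivative (X * ((1 - X) * derivative Q + (N : Polynomial ℂ) * Q)) * (Q * (1 - X)) -
            X * ((1 - X) * derivative Q + (N : Polynomial ℂ) * Q) * derivative (Q * (1 - X)))
        = Polynomial.C c * Q ^ (N + 1)) :
    ∀ α : ℂ, Q.eval α ≠ 0 := by
  intro α hα
  have hQne : Q ≠ 0 := fun h => hQ0 (by simp [h])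
  have hα0 : α ≠ 0 := fun h => hQ0 (h ▸ hα)
  have hα1 : α ≠ 1 := fun h => hQ1 (h ▸ hα)
  have hZne : (X - Polynomial.C α) ≠ 0 := X_sub_C_ne_zero α
  obtain ⟨q', hq'⟩ : ∃ q', Q.rootMultiplicity α = q' + 1 :=
    ⟨_, (Nat.succ_pred_eq_of_pos ((Q.rootMultiplicity_pos hQne).mpr hα)).symm⟩
  set g : Polynomial ℂ := Q /ₘ (X - Polynomial.C α) ^ (Q.rootMultiplicity α) with hgdef
  have hgα : g.eval α ≠ 0 := eval_divByMonic_pow_rootMultiplicity_ne_zero α hQne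
  have hfact : Q = (X - Polynomial.C α) ^ (q' + 1) * g := by
    conv_lhs => rw [← Q.pow_mul_divByMonic_rootMultiplicity_eq α]
    rw [hq', hgdef, hq']
  set Z : Polynomial ℂ := X - Polynomial.C α with hZdef
  set L : Polynomial ℂ := 1 - X with hLdef
  set u : Polynomial ℂ := L * derivative Q + (N : Polynomial ℂ) * Q with hudef
  set w : Polynomial ℂ := L * (Polynomial.C ((q' : ℂ) + 1) * g + Z * derivative g)
      + (N : Polynomial ℂ) * (Z * g) with hwdef
  have hdQ : derivative Q = Polynomial.C ((q' : ℂ) + 1) * Z ^ q' * derivative Z * g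
      + Z ^ (q' + 1) * derivative g := by
    rw [hfact, derivative_mul, derivative_pow]
    push_cast
    ring_nf
  have hdZ : derivative Z = 1 := by rw [hZdef, derivative_X_sub_C]
  have e_u : u = Z ^ q' * w := by
    rw [hudef, hwdef, hdQ, hdZ, hfact]; ring
  set b : Polynomial ℂ := Polynomial.C A * (Z * (g * L)) + Polynomial.C s * (X * w) with hbdef
  have e_B : Polynomial.C A * (Q * L) + Polynomial.C s * X * u = Z ^ q' * b := by
    rw [hbdef, e_u, hfact]; ring
  set v1 : Polynomial ℂ := Z * (derivative (X * w) * (g * L) - (X * w) * derivative (g * L))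
      - (X * w) * (g * L) with hv1def
  clear_value g Z L u w b v1
  have exu : X * u = Z ^ q' * (X * w) := by rw [e_u]; ring
  have eQL : Q * L = Z ^ (q' + 1) * (g * L) := by rw [hfact]; ring
  have e_v : derivative (X * u) * (Q * L) - X * u * derivative (Q * L)
      = Z ^ (2 * q') * v1 := by
    rw [exu, eQL, hv1def, hZdef]
    exact wron α q' (X * w) (g * L)
  rw [e_v, e_B, e_u, hfact] at hid
  have hid2 : Z ^ (q' * N) * (b ^ (n' + 1) * w ^ m' * v1)
      = Z ^ (q' * N) * (Polynomial.C c * (Z ^ (q' + N + 1) * g ^ (N + 1))) := by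
    have e1 : Z ^ (q' * N) * (b ^ (n' + 1) * w ^ m' * v1)
        = (Z ^ q' * b) ^ (n' + 1) * (Z ^ q' * w) ^ m' * (Z ^ (2 * q') * v1) := by
      rw [hN]; ring
    have e2 : Z ^ (q' * N) * (Polynomial.C c * (Z ^ (q' + N + 1) * g ^ (N + 1)))
        = Polynomial.C c * (Z ^ (q' + 1) * g) ^ (N + 1) := by
      ring
    rw [e1, e2, hid]
  have hkey : b ^ (n' + 1) * w ^ m' * v1
      = Polynomial.C c * (Z ^ (q' + N + 1) * g ^ (N + 1)) :=
    mul_left_cancel₀ (pow_ne_zero _ hZne) hid2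
  have hZα : Z.eval α = 0 := by simp [hZdef]
  have hLα : L.eval α = 1 - α := by simp [hLdef]
  have hwα : w.eval α = (1 - α) * (((q' : ℂ) + 1) * g.eval α) := by
    simp [hwdef, hZα, hLα]
  have hwne : w.eval α ≠ 0 := by
    rw [hwα]
    exact mul_ne_zero (sub_ne_zero.mpr fun h => hα1 h.symm)
      (mul_ne_zero (by exact_mod_cast Nat.succ_ne_zero q') hgα)
  have hbne : b.eval α ≠ 0 := by
    have : b.eval α = s * (α * w.eval α) := by simp [hbdef, hZα]
    rw [this]
    exact mul_ne_zero hs (mul_ne_zero hα0 hwne)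
  have hv1ne : v1.eval α ≠ 0 := by
    have : v1.eval α = -((α * w.eval α) * (g.eval α * (1 - α))) := by
      simp [hv1def, hZα, hLα]
    rw [this]
    exact neg_ne_zero.mpr (mul_ne_zero (mul_ne_zero hα0 hwne)
      (mul_ne_zero hgα (sub_ne_zero.mpr fun h => hα1 h.symm)))
  have := congrArg (Polynomial.eval α) hkey
  simp only [eval_mul, eval_pow, eval_C, hZα] at this
  rw [zero_pow (by omega : q' + N + 1 ≠ 0)] at this
  simp only [zero_mul, mul_zero] at this
  exact (mul_ne_zero (mul_ne_zero (pow_ne_zero _ hbne) (pow_ne_zero _ hwne)) hv1ne) this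

private lemma hasDerivAt_aux (Q : Polynomial ℝ) (N : ℕ) (hN : 0 < N) (t : ℝ)
    (ht : (1:ℝ) - t ≠ 0) :
    HasDerivAt (fun x : ℝ => Q.eval x / (1 - x) ^ N)
      (((1 - X) * derivative Q + Polynomial.C ((N : ℕ) : ℝ) * Q).eval t / (1 - t) ^ (N + 1)) t := by
  obtain ⟨N', rfl⟩ : ∃ N', N = N' + 1 := ⟨N - 1, by omega⟩
  have h1 : HasDerivAt (fun x : ℝ => Q.eval x) (Q.derivative.eval t) t := Q.hasDerivAt t
  have h2 : HasDerivAt (fun x : ℝ => (1 - x) ^ (N' + 1))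
      (((N' : ℝ) + 1) * (1 - t) ^ N' * (-1)) t := by
    have h0 : HasDerivAt (fun x : ℝ => 1 - x) (-1) t := (hasDerivAt_id t).const_sub 1
    have := h0.fun_pow (N' + 1)
    simpa using this
  have h3 := h1.fun_div h2 (pow_ne_zero _ ht)
  refine h3.congr_deriv (Eq.symm ?_)
  simp only [eval_add, eval_mul, eval_sub, eval_one, eval_X, eval_C]
  rw [div_eq_div_iff (pow_ne_zero _ ht) (by exact pow_ne_zero _ (pow_ne_zero _ ht))]
  push_cast
  ring

/-- collapse of the radial factor. If `P` has degree exactly `n`,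
`P(1) > 0`, `R(t) = y^{m+1}P(y)` with `y = 1/(1−t)`, `p = R'/R`, `s ≠ 0`, and the
Einstein identity `(A + s t p)^n p^{m−1}(p + t p') = C·R` holds identically
(`C` a nonzero constant), then `P(y) = c·y^n` with `c = A_n > 0`, i.e.
`R(t) = c(1−t)^{−(n+m+1)}`. -/
theorem radial_collapse (n m : ℕ) (hn : 0 < n) (hm : 0 < m)
    (P : Polynomial ℝ) (hdeg : P.natDegree = n) (hAn : P.coeff n ≠ 0)
    (hP1 : 0 < P.eval 1) (A s C : ℝ) (hs : s ≠ 0) (hC : C ≠ 0)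
    (R : ℝ → ℝ) (hR : ∀ t : ℝ, R t = (1 / (1 - t)) ^ (m + 1) * P.eval (1 / (1 - t)))
    (p : ℝ → ℝ) (hp : ∀ t : ℝ, p t = deriv R t / R t)
    (hid : ∀ t ∈ Set.Ioo (0 : ℝ) 1, R t ≠ 0 →
      (A + s * t * p t) ^ n * (p t) ^ (m - 1) * (p t + t * deriv p t) = C * R t) :
    0 < P.coeff n ∧ P = Polynomial.C (P.coeff n) * Polynomial.X ^ n ∧
      ∀ t : ℝ, R t = P.coeff n * (1 / (1 - t)) ^ (n + m + 1) := by
  obtain ⟨n', rfl⟩ : ∃ n', n = n' + 1 := ⟨n - 1, by omega⟩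
  obtain ⟨m', rfl⟩ : ∃ m', m = m' + 1 := ⟨m - 1, by omega⟩
  set n : ℕ := n' + 1 with hn_def
  set m : ℕ := m' + 1 with hm_def
  set N : ℕ := n + m + 1 with hNdef
  have hNval : N = n' + m' + 3 := by omega
  set Q : Polynomial ℝ := ∑ j ∈ Finset.range (n + 1),
      Polynomial.C (P.coeff j) * (1 - X) ^ (n - j) with hQdef
  have hQeval : ∀ t : ℝ, Q.eval t
      = ∑ j ∈ Finset.range (n + 1), P.coeff j * (1 - t) ^ (n - j) := by
    intro t
    rw [hQdef, eval_finset_sum]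
    exact Finset.sum_congr rfl fun j _ => by simp
  have hQ1 : Q.eval 1 = P.coeff n := by
    rw [hQeval, Finset.sum_eq_single n]
    · simp
    · intro j hj hjn
      simp only [Finset.mem_range] at hj
      rw [sub_self, zero_pow (by omega : n - j ≠ 0), mul_zero]
    · intro h
      exact absurd (Finset.self_mem_range_succ n) h
  have hQ0 : Q.eval 0 = P.eval 1 := by
    rw [hQeval, Polynomial.eval_eq_sum_range, hdeg]
    simp
  have hQt : ∀ t : ℝ, t ≠ 1 → Q.eval t = (1 - t) ^ n * P.eval (1 / (1 - t)) := by
    intro t ht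
    have h1t : (1 : ℝ) - t ≠ 0 := sub_ne_zero.mpr (Ne.symm ht)
    rw [hQeval, Polynomial.eval_eq_sum_range, hdeg, Finset.mul_sum]
    refine Finset.sum_congr rfl fun j hj => ?_
    simp only [Finset.mem_range] at hj
    have e : (1 - t) ^ n = (1 - t) ^ (n - j) * (1 - t) ^ j := by
      rw [← pow_add]
      congr 1
      omega
    rw [e, one_div, inv_pow]
    field_simp
  have hRt : ∀ t : ℝ, R t = Q.eval t / (1 - t) ^ N := by
    intro t
    by_cases ht : t = 1
    · subst ht
      rw [hR]
      norm_num
      rw [zero_pow (by omega : N ≠ 0), div_zero]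
    · have h1t : (1 : ℝ) - t ≠ 0 := sub_ne_zero.mpr (Ne.symm ht)
      rw [hR, hQt t ht, hNdef]
      rw [one_div, inv_pow]
      field_simp
      ring
  set u : Polynomial ℝ := (1 - X) * derivative Q + Polynomial.C ((N : ℕ) : ℝ) * Q with hudef
  set S : Polynomial ℝ := Q * (1 - X) with hSdef
  have hRderiv : ∀ t : ℝ, t ≠ 1 → deriv R t = u.eval t / (1 - t) ^ (N + 1) := by
    intro t ht
    have h1t : (1 : ℝ) - t ≠ 0 := sub_ne_zero.mpr (Ne.symm ht)
    have : R = fun x : ℝ => Q.eval x / (1 - x) ^ N := funext hRt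
    rw [this]
    exact (hasDerivAt_aux Q N (by omega) t h1t).deriv
  have hSne : ∀ t : ℝ, t ≠ 1 → Q.eval t ≠ 0 → S.eval t ≠ 0 := by
    intro t ht hQne
    have h1t : (1 : ℝ) - t ≠ 0 := sub_ne_zero.mpr (Ne.symm ht)
    simp only [hSdef, eval_mul, eval_sub, eval_one, eval_X]
    exact mul_ne_zero hQne h1t
  have hpt : ∀ t : ℝ, t ≠ 1 → Q.eval t ≠ 0 → p t = u.eval t / S.eval t := by
    intro t ht hQne
    have h1t : (1 : ℝ) - t ≠ 0 := sub_ne_zero.mpr (Ne.symm ht)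
    rw [hp, hRderiv t ht, hRt]
    simp only [hSdef, eval_mul, eval_sub, eval_one, eval_X]
    field_simp
    ring
  have hderivp : ∀ t : ℝ, t ≠ 1 → Q.eval t ≠ 0 →
      deriv p t = ((derivative u).eval t * S.eval t - u.eval t * (derivative S).eval t)
        / S.eval t ^ 2 := by
    intro t ht hQne
    have hev : p =ᶠ[nhds t] fun x => u.eval x / S.eval x := by
      have hmem : {x : ℝ | x ≠ 1} ∩ (fun x => Q.eval x) ⁻¹' {0}ᶜ ∈ nhds t := by
        refine IsOpen.mem_nhds ?_ ⟨ht, hQne⟩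
        exact isOpen_ne.inter (isOpen_compl_singleton.preimage Q.continuous)
      filter_upwards [hmem] with x hx
      exact hpt x hx.1 hx.2
    rw [hev.deriv_eq]
    exact ((u.hasDerivAt t).div (S.hasDerivAt t) (hSne t ht hQne)).deriv
  set v : Polynomial ℝ := derivative (X * u) * S - X * u * derivative S with hvdef
  set Num : Polynomial ℝ := (Polynomial.C A * S + Polynomial.C s * X * u) ^ n * u ^ m' * v
    with hNumdef
  have hNum : ∀ t ∈ Set.Ioo (0:ℝ) 1, Q.eval t ≠ 0 → Num.eval t = C * Q.eval t ^ (N + 1) := by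
    intro t htIoo hQne
    have ht1 : t ≠ 1 := ne_of_lt htIoo.2
    have h1t : (1:ℝ) - t ≠ 0 := sub_ne_zero.mpr (Ne.symm ht1)
    have hSneT := hSne t ht1 hQne
    have hRne : R t ≠ 0 := by
      rw [hRt]
      exact div_ne_zero hQne (pow_ne_zero _ h1t)
    have h := hid t htIoo hRne
    rw [hpt t ht1 hQne, hderivp t ht1 hQne, hRt t] at h
    have e1 : A + s * t * (u.eval t / S.eval t)
        = (A * S.eval t + s * t * u.eval t) / S.eval t := by field_simp
    have e2 : u.eval t / S.eval t
          + t * (((derivative u).eval t * S.eval t - u.eval t * (derivative S).eval t)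
            / S.eval t ^ 2) = v.eval t / S.eval t ^ 2 := by
      rw [hvdef]
      simp only [derivative_mul, derivative_X, one_mul, eval_add, eval_sub, eval_mul, eval_X]
      field_simp
      ring
    rw [e1, e2, div_pow, div_pow, show m - 1 = m' from by omega] at h
    have eNum : Num.eval t = (A * S.eval t + s * t * u.eval t) ^ n * u.eval t ^ m' * v.eval t := by
      simp only [hNumdef, eval_mul, eval_pow, eval_add, eval_C, eval_X]
    have e3 : (A * S.eval t + s * t * u.eval t) ^ n / S.eval t ^ n * (u.eval t ^ m' / S.eval t ^ m')
        * (v.eval t / S.eval t ^ 2) = Num.eval t / S.eval t ^ N := by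
      rw [eNum, div_mul_div_comm, div_mul_div_comm, ← pow_add, ← pow_add,
        show n + m' + 2 = N from by omega]
    rw [e3] at h
    have e4 : S.eval t = Q.eval t * (1 - t) := by
      simp [hSdef]
    rw [← mul_div_assoc, div_eq_div_iff (pow_ne_zero _ hSneT) (pow_ne_zero _ h1t)] at h
    rw [e4, mul_pow] at h
    have h' : Num.eval t * (1 - t) ^ N = (C * Q.eval t ^ (N + 1)) * (1 - t) ^ N := by
      rw [h]
      ring
    exact mul_right_cancel₀ (pow_ne_zero _ h1t) h'
  have hQne0 : Q ≠ 0 := by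
    intro h
    rw [h] at hQ0
    simp only [eval_zero] at hQ0
    exact (ne_of_gt hP1) hQ0.symm
  have hpoly : Num = Polynomial.C C * Q ^ (N + 1) := by
    rw [← sub_eq_zero]
    apply Polynomial.eq_zero_of_infinite_isRoot
    apply Set.Infinite.mono (s := Set.Ioo (0:ℝ) 1 \ {x : ℝ | Q.IsRoot x})
    · intro x hx
      have hxQ : Q.eval x ≠ 0 := hx.2
      have := hNum x hx.1 hxQ
      simp only [Set.mem_setOf_eq, IsRoot, eval_sub, eval_mul, eval_pow, eval_C]
      rw [this]
      ring
    · exact (Set.Ioo_infinite (by norm_num)).diff (Polynomial.finite_setOf_isRoot hQne0)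
  rw [hNumdef, hvdef, hSdef, hudef] at hpoly
  have hpolyC := congrArg (Polynomial.map (algebraMap ℝ ℂ)) hpoly
  simp only [← Polynomial.derivative_map, Polynomial.map_mul, Polynomial.map_pow,
    Polynomial.map_add, Polynomial.map_sub, Polynomial.map_one, Polynomial.map_C,
    Polynomial.map_X, Polynomial.map_natCast, map_natCast] at hpolyC
  have hQc0 : (Q.map (algebraMap ℝ ℂ)).eval 0 ≠ 0 := by
    rw [Polynomial.eval_zero_map, hQ0]
    simpa using ne_of_gt hP1
  have hQc1 : (Q.map (algebraMap ℝ ℂ)).eval 1 ≠ 0 := by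
    rw [Polynomial.eval_one_map, hQ1]
    simpa using hAn
  have hroots := no_root_aux n' m' N hNval (algebraMap ℝ ℂ A) (algebraMap ℝ ℂ s)
    (algebraMap ℝ ℂ C) (by simpa using hs) (Q.map (algebraMap ℝ ℂ)) hQc0 hQc1 hpolyC
  have hQdeg0 : Q.natDegree = 0 := by
    by_contra hne
    have hdm : (Q.map (algebraMap ℝ ℂ)).degree = Q.degree :=
      degree_map_eq_of_injective (algebraMap ℝ ℂ).injective Q
    have hdQne : Q.degree ≠ 0 := by
      rw [Polynomial.degree_eq_natDegree hQne0]
      exact_mod_cast hne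
    obtain ⟨z, hz⟩ := IsAlgClosed.exists_root (Q.map (algebraMap ℝ ℂ)) (hdm ▸ hdQne)
    exact hroots z hz
  have hQC : Q = Polynomial.C (P.eval 1) := by
    have h1 := Polynomial.eq_C_of_natDegree_eq_zero hQdeg0
    rw [h1] at hQ0
    simp only [eval_C] at hQ0
    rw [h1, hQ0]
  have hcn : P.coeff n = P.eval 1 := by
    rw [hQC] at hQ1
    simpa using hQ1.symm
  have hTall : ∀ y : ℝ, ∑ j ∈ Finset.range (n + 1), P.coeff j * y ^ (n - j) = P.eval 1 := by
    intro y
    have h := hQeval (1 - y)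
    rw [hQC] at h
    simp only [eval_C, sub_sub_cancel] at h
    exact h.symm
  set T : Polynomial ℝ := ∑ j ∈ Finset.range (n + 1), Polynomial.C (P.coeff j) * X ^ (n - j)
    with hTdef
  have hTC : T = Polynomial.C (P.eval 1) := by
    rw [← sub_eq_zero]
    apply Polynomial.eq_zero_of_infinite_isRoot
    refine (Set.infinite_univ (α := ℝ)).mono fun x _ => ?_
    simp only [Set.mem_setOf_eq, IsRoot, eval_sub, eval_C, hTdef, eval_finset_sum, eval_mul,
      eval_pow, eval_X, sub_eq_zero]
    exact hTall x
  have hcoeff0 : ∀ j, j < n → P.coeff j = 0 := by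
    intro j hj
    have h1 : T.coeff (n - j) = P.coeff j := by
      rw [hTdef, finset_sum_coeff]
      rw [Finset.sum_eq_single j]
      · simp [coeff_X_pow]
      · intro b hb hbj
        simp only [Finset.mem_range] at hb
        rw [coeff_C_mul, coeff_X_pow, if_neg (by omega), mul_zero]
      · intro hj2
        exact absurd (Finset.mem_range.mpr (by omega)) hj2
    rw [hTC] at h1
    rw [← h1, coeff_C, if_neg (by omega : ¬ n - j = 0)]
  have hPeq : P = Polynomial.C (P.coeff n) * X ^ n := by
    ext k
    rw [coeff_C_mul, coeff_X_pow]
    rcases lt_trichotomy k n with hk | hk | hk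
    · rw [hcoeff0 k hk, if_neg (by omega), mul_zero]
    · subst hk
      simp
    · rw [Polynomial.coeff_eq_zero_of_natDegree_lt (by omega : P.natDegree < k),
        if_neg (by omega), mul_zero]
  have hPev : ∀ y : ℝ, P.eval y = P.coeff n * y ^ n := by
    intro y
    conv_lhs => rw [hPeq]
    simp
  refine ⟨by rw [hcn]; exact hP1, hPeq, ?_⟩
  intro t
  rw [hR t, hPev]
  ring
end
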